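/- Let k ≥ 5 be an odd integer. Then for every integer n ≥ (k−1)/2 there exists a k-hyperantihole A with ω(A) = n and χ(A) = g_k(n). -/

import Mathlib

open SimpleGraph

/-- The closed neighborhood `N_G[v]` of a vertex `v`. -/
def closedNbhd {V : Type} (G : SimpleGraph V) (v : V) : Set V :=
  insert v (G.neighborSet v)

/-- `X` (indexed cyclically by `ZMod k`) is a ring partition of `G`:
a partition into `k` nonempty sets, each of which can be ordered so that the
closed neighborhoods are nested, with the last one covering `X i` and the first
one being exactly `X (i-1) ∪ X i ∪ X (i+1)`. -/
def IsRingPartition {V : Type} (G : SimpleGraph V) (k : ℕ) (X : ZMod k → Set V) : Prop :=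
  (∀ i, (X i).Nonempty) ∧
  (∀ v : V, ∃! i, v ∈ X i) ∧
  ∀ i, ∃ (m : ℕ) (hm : 0 < m) (u : Fin m → V),
    Function.Injective u ∧
    Set.range u = X i ∧
    (∀ j j' : Fin m, j ≤ j' → closedNbhd G (u j') ⊆ closedNbhd G (u j)) ∧
    X i ⊆ closedNbhd G (u ⟨m - 1, by omega⟩) ∧
    closedNbhd G (u ⟨0, hm⟩) = X (i - 1) ∪ X i ∪ X (i + 1)

/-- `G` is a `k`-ring. -/
def IsRing {V : Type} (G : SimpleGraph V) (k : ℕ) : Prop :=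
  ∃ X : ZMod k → Set V, IsRingPartition G k X

/-- `X` is a hyperhole partition of `G`: a partition into `k` nonempty cliques,
each complete to the two neighboring cliques and anticomplete to all remaining
vertices. -/
def IsHyperholePartition {V : Type} (G : SimpleGraph V) (k : ℕ) (X : ZMod k → Set V) : Prop :=
  (∀ i, (X i).Nonempty) ∧
  (∀ v : V, ∃! i, v ∈ X i) ∧
  (∀ i, G.IsClique (X i)) ∧
  (∀ i, ∀ x ∈ X i, ∀ y ∈ X (i - 1) ∪ X (i + 1), G.Adj x y) ∧
  (∀ i, ∀ x ∈ X i, ∀ y, y ∉ X (i - 1) ∪ X i ∪ X (i + 1) → ¬ G.Adj x y)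

/-- `G` is a `k`-hyperhole. -/
def IsHyperhole {V : Type} (G : SimpleGraph V) (k : ℕ) : Prop :=
  ∃ X : ZMod k → Set V, IsHyperholePartition G k X

/-- `X` is a hyperantihole partition of `G`: a partition into `k` nonempty cliques,
each complete to all vertices outside the two neighboring cliques (and itself),
and anticomplete to the two neighboring cliques. -/
def IsHyperantiholePartition {V : Type} (G : SimpleGraph V) (k : ℕ) (X : ZMod k → Set V) : Prop :=
  (∀ i, (X i).Nonempty) ∧
  (∀ v : V, ∃! i, v ∈ X i) ∧
  (∀ i, G.IsClique (X i)) ∧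
  (∀ i, ∀ x ∈ X i, ∀ y, y ∉ X (i - 1) ∪ X i ∪ X (i + 1) → G.Adj x y) ∧
  (∀ i, ∀ x ∈ X i, ∀ y ∈ X (i - 1) ∪ X (i + 1), ¬ G.Adj x y)

/-- `G` is a `k`-hyperantihole. -/
def IsHyperantihole {V : Type} (G : SimpleGraph V) (k : ℕ) : Prop :=
  ∃ X : ZMod k → Set V, IsHyperantiholePartition G k X

/-- A vertex is simplicial if its neighborhood is a clique. -/
def IsSimplicial {V : Type} (G : SimpleGraph V) (v : V) : Prop :=
  G.IsClique (G.neighborSet v)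

/-- A graph is perfect if every induced subgraph has chromatic number equal to
its clique number. -/
def IsPerfect {V : Type} (G : SimpleGraph V) : Prop :=
  ∀ S : Set V, (G.induce S).chromaticNumber = ((G.induce S).cliqueNum : ℕ∞)

/-- The function `f_k`: `⌊kn/(k-1)⌋` if `n ≡ 0, 1 (mod k-1)`, and `⌈kn/(k-1)⌉`
otherwise. -/
def ringF (k n : ℕ) : ℕ :=
  if n % (k - 1) ≤ 1 then k * n / (k - 1) else (k * n + (k - 2)) / (k - 1)

/-- The function `g_k`: `⌊kn/(k-1)⌋` if `n mod (k-1) ∈ {0, …, (k-3)/2}`, and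
`⌈kn/(k-1)⌉` if `n mod (k-1) ∈ {(k-1)/2, …, k-2}`. -/
def ringG (k n : ℕ) : ℕ :=
  if n % (k - 1) ≤ (k - 3) / 2 then k * n / (k - 1) else (k * n + (k - 2)) / (k - 1)

/-- The function `f_T`: `⌊5n/4⌋` if `n ≡ 0, 1 (mod 4)`, and `⌈5n/4⌉` if
`n ≡ 2, 3 (mod 4)`. -/
def fT (n : ℕ) : ℕ :=
  if n % 4 ≤ 1 then 5 * n / 4 else (5 * n + 3) / 4

/-- `G` contains the complete graph `K_m` as a minor, witnessed by `m` pairwise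
disjoint nonempty branch sets, each inducing a connected subgraph, with an edge
between every two of them. -/
def HasCompleteMinor {V : Type} (G : SimpleGraph V) (m : ℕ) : Prop :=
  ∃ S : Fin m → Set V,
    (∀ i, (S i).Nonempty) ∧
    (∀ i j, i ≠ j → Disjoint (S i) (S j)) ∧
    (∀ i, (G.induce (S i)).Connected) ∧
    (∀ i j, i ≠ j → ∃ x ∈ S i, ∃ y ∈ S j, G.Adj x y)


namespace HAH
open Finset

def w (k s a l : ℕ) : ℕ :=
  if l % 2 = 1 then 0
  else if a % 2 = 0 then (if l < 2*s then 1 else 0)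
  else (if l < 2*s then 2 else if l + 3 ≤ k then 1 else 0)

def x (k s a l : ℕ) : ℕ := a / 2 + w k s a l

def S (k s a j : ℕ) : ℕ := ∑ l ∈ Finset.range j, x k s a l

def P (k s a : ℕ) : ℕ := S k s a k

def M (k s a : ℕ) : ℕ := 2 * P k s a + a % 2

def iF (k s a t : ℕ) : ℕ := ((Finset.range k).filter (fun j => S k s a (j+1) ≤ t)).card

def pN (k s a v : ℕ) : ZMod k :=
  if a % 2 = 1 ∧ v + 1 = M k s a then ((k-1 : ℕ) : ZMod k)
  else ((iF k s a (v / 2) + v % 2 : ℕ) : ZMod k)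

@[reducible]
def A (k s a : ℕ) : SimpleGraph (Fin (M k s a)) where
  Adj u v := u ≠ v ∧ pN k s a u.val - pN k s a v.val ≠ 1 ∧ pN k s a v.val - pN k s a u.val ≠ 1
  symm := ⟨fun _ _ ⟨h1, h2, h3⟩ => ⟨h1.symm, h3, h2⟩⟩
  loopless := ⟨fun v h => h.1 rfl⟩

lemma S_succ (k s a j : ℕ) : S k s a (j+1) = S k s a j + x k s a j :=
  Finset.sum_range_succ _ j

lemma S_mono (k s a : ℕ) {j j' : ℕ} (h : j ≤ j') : S k s a j ≤ S k s a j' :=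
  Finset.sum_le_sum_of_subset (Finset.range_subset_range.2 h)

lemma exists_block (k s a : ℕ) {t K : ℕ} (h : t < S k s a K) :
    ∃ j, j < K ∧ S k s a j ≤ t ∧ t < S k s a (j+1) := by
  induction K with
  | zero => simp [S] at h
  | succ K ih =>
    by_cases h' : t < S k s a K
    · obtain ⟨j, hj, h1, h2⟩ := ih h'
      exact ⟨j, by omega, h1, h2⟩
    · exact ⟨K, by omega, by omega, h⟩

lemma iF_eq (k s a : ℕ) {t j : ℕ} (hj : j < k) (h1 : S k s a j ≤ t) (h2 : t < S k s a (j+1)) :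
    iF k s a t = j := by
  have : (Finset.range k).filter (fun j' => S k s a (j'+1) ≤ t) = Finset.range j := by
    ext j'
    simp only [Finset.mem_filter, Finset.mem_range]
    constructor
    · rintro ⟨h3, h4⟩
      by_contra h5
      exact absurd (le_trans (S_mono k s a (by omega : j + 1 ≤ j' + 1)) h4) (by omega)
    · intro h3
      exact ⟨by omega, le_trans (S_mono k s a (by omega : j' + 1 ≤ j)) h1⟩
  rw [iF, this, Finset.card_range]

lemma iF_spec (k s a : ℕ) {t : ℕ} (h : t < P k s a) :
    iF k s a t < k ∧ S k s a (iF k s a t) ≤ t ∧ t < S k s a (iF k s a t + 1) := by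
  obtain ⟨j, hj, h1, h2⟩ := exists_block k s a (h : t < S k s a k)
  rw [iF_eq k s a hj h1 h2]
  exact ⟨hj, h1, h2⟩

lemma iF_count (k s a : ℕ) {j : ℕ} (hj : j < k) :
    ((Finset.range (P k s a)).filter (fun t => iF k s a t = j)).card = x k s a j := by
  have : (Finset.range (P k s a)).filter (fun t => iF k s a t = j)
      = Finset.Ico (S k s a j) (S k s a (j+1)) := by
    ext t
    simp only [Finset.mem_filter, Finset.mem_range, Finset.mem_Ico]
    constructor
    · rintro ⟨h1, rfl⟩
      exact (iF_spec k s a h1).2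
    · rintro ⟨h1, h2⟩
      refine ⟨lt_of_lt_of_le h2 (S_mono k s a (by omega)), iF_eq k s a hj h1 h2⟩
  rw [this, Nat.card_Ico, S_succ]
  omega

lemma pointwise (k q s a : ℕ) (hk : k = 2*q+1) (hq : 2 ≤ q) (hs : s < q) (_ha : 1 ≤ a)
    {j : ℕ} (hj : j < k) :
    x k s a j + x k s a (if j = 0 then k-1 else j-1) + (if a % 2 = 1 ∧ j = k-1 then 1 else 0)
      = a + (if j < 2*s then 1 else 0) := by
  unfold x w
  split_ifs <;> omega

lemma sum_double (f : ℕ → ℕ) (n : ℕ) :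
    ∑ v ∈ range (2*n), f v = ∑ t ∈ range n, (f (2*t) + f (2*t+1)) := by
  induction n with
  | zero => simp
  | succ n ih =>
    rw [Finset.sum_range_succ, ← ih, show 2*(n+1) = (2*n+1)+1 by ring,
      Finset.sum_range_succ, Finset.sum_range_succ]
    ring

lemma pN_even (k s a : ℕ) {t : ℕ} (h : t < P k s a) :
    pN k s a (2*t) = ((iF k s a t : ℕ) : ZMod k) := by
  rw [pN, if_neg (by rw [M]; omega)]
  rw [show 2*t/2 = t by omega, show (2*t) % 2 = 0 by omega]
  norm_num

lemma pN_odd (k s a : ℕ) {t : ℕ} (_h : t < P k s a) :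
    pN k s a (2*t+1) = ((iF k s a t + 1 : ℕ) : ZMod k) := by
  rw [pN, if_neg (by rw [M]; omega)]
  rw [show (2*t+1)/2 = t by omega, show (2*t+1) % 2 = 1 by omega]

lemma pN_last (k s a : ℕ) (h : a % 2 = 1) :
    pN k s a (2 * P k s a) = ((k-1 : ℕ) : ZMod k) := by
  rw [pN, if_pos (by rw [M]; omega)]


lemma cast_iF_eq_iff (k s a : ℕ) [NeZero k] {t : ℕ} (ht : t < P k s a) (i : ZMod k) :
    ((iF k s a t : ℕ) : ZMod k) = i ↔ iF k s a t = i.val := by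
  constructor
  · intro h
    rw [← h, ZMod.val_cast_of_lt (iF_spec k s a ht).1]
  · intro h
    rw [h]
    exact ZMod.natCast_rightInverse i

lemma cast_iF_succ_eq_iff (k s a : ℕ) [NeZero k] {t : ℕ} (ht : t < P k s a) (i : ZMod k) :
    ((iF k s a t + 1 : ℕ) : ZMod k) = i ↔ iF k s a t = (if i.val = 0 then k-1 else i.val - 1) := by
  have hlt := (iF_spec k s a ht).1
  have hk1 : 1 ≤ k := Nat.one_le_iff_ne_zero.2 (NeZero.ne k)
  constructor
  · intro h
    by_cases hc : iF k s a t + 1 = k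
    · have h0 : ((iF k s a t + 1 : ℕ) : ZMod k) = 0 := by
        rw [hc]; exact_mod_cast ZMod.natCast_self k
      have : i.val = 0 := by rw [← h, h0, ZMod.val_zero]
      rw [if_pos this]; omega
    · have hlt2 : iF k s a t + 1 < k := by omega
      have : i.val = iF k s a t + 1 := by rw [← h, ZMod.val_cast_of_lt hlt2]
      rw [if_neg (by omega)]; omega
  · intro h
    by_cases hz : i.val = 0
    · rw [if_pos hz] at h
      have hi : i = 0 := by
        have := ZMod.natCast_rightInverse i
        rw [hz] at this; exact_mod_cast this.symm
      rw [show iF k s a t + 1 = k by omega, hi]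
      exact_mod_cast ZMod.natCast_self k
    · rw [if_neg hz] at h
      rw [show iF k s a t + 1 = i.val by omega]
      exact ZMod.natCast_rightInverse i

lemma fib_card (k q s a : ℕ) (hk : k = 2*q+1) (hq : 2 ≤ q) (hs : s < q) (ha : 1 ≤ a)
    [NeZero k] (i : ZMod k) :
    (Finset.univ.filter (fun v : Fin (M k s a) => pN k s a v.val = i)).card
      = a + (if i.val < 2*s then 1 else 0) := by
  classical
  have hvk : i.val < k := ZMod.val_lt i
  have hjpk : (if i.val = 0 then k-1 else i.val - 1) < k := by split_ifs <;> omega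
  have h1 : (Finset.univ.filter (fun v : Fin (M k s a) => pN k s a v.val = i)).card
      = ∑ v ∈ range (M k s a), (if pN k s a v = i then 1 else 0) := by
    rw [Finset.card_filter]
    exact Fin.sum_univ_eq_sum_range (fun v => if pN k s a v = i then 1 else 0) (M k s a)
  have heven : ∑ t ∈ range (P k s a), (if pN k s a (2*t) = i then 1 else 0)
      = x k s a i.val := by
    rw [← iF_count k s a hvk, Finset.card_filter]
    refine Finset.sum_congr rfl (fun t ht => ?_)
    rw [Finset.mem_range] at ht
    rw [pN_even k s a ht]
    exact if_congr (cast_iF_eq_iff k s a ht i) rfl rfl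
  have hodd : ∑ t ∈ range (P k s a), (if pN k s a (2*t+1) = i then 1 else 0)
      = x k s a (if i.val = 0 then k-1 else i.val - 1) := by
    rw [← iF_count k s a hjpk, Finset.card_filter]
    refine Finset.sum_congr rfl (fun t ht => ?_)
    rw [Finset.mem_range] at ht
    rw [pN_odd k s a ht]
    exact if_congr (cast_iF_succ_eq_iff k s a ht i) rfl rfl
  have hpair : ∑ v ∈ range (2 * P k s a), (if pN k s a v = i then 1 else 0)
      = x k s a i.val + x k s a (if i.val = 0 then k-1 else i.val - 1) := by
    rw [sum_double, Finset.sum_add_distrib, heven, hodd]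
  have hpw := pointwise k q s a hk hq hs ha hvk
  rcases Nat.mod_two_eq_zero_or_one a with ha2 | ha2
  · rw [h1, show M k s a = 2 * P k s a by rw [M]; omega, hpair]
    rw [ha2] at hpw
    simpa using hpw
  · rw [h1, show M k s a = 2 * P k s a + 1 by rw [M]; omega, Finset.sum_range_succ, hpair]
    have hlast : (if pN k s a (2 * P k s a) = i then 1 else 0)
        = (if i.val = k - 1 then 1 else 0) := by
      rw [pN_last k s a ha2]
      refine if_congr ?_ rfl rfl
      constructor
      · intro h
        rw [← h, ZMod.val_cast_of_lt (by omega : k - 1 < k)]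
      · intro h
        rw [← h]
        exact ZMod.natCast_rightInverse i
    rw [hlast]
    rw [ha2] at hpw
    simp only [true_and] at hpw
    omega


lemma val_injective (k : ℕ) [NeZero k] : Function.Injective (ZMod.val : ZMod k → ℕ) :=
  Function.LeftInverse.injective (ZMod.natCast_rightInverse)

lemma card_val_filter (k : ℕ) [NeZero k] (Q : ℕ → Prop) [DecidablePred Q] :
    (Finset.univ.filter (fun i : ZMod k => Q i.val)).card = ((range k).filter Q).card := by
  classical
  refine Finset.card_bij' (fun i _ => i.val) (fun j _ => (j : ZMod k)) ?_ ?_ ?_ ?_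
  · intro i hi
    rw [Finset.mem_filter] at hi ⊢
    exact ⟨Finset.mem_range.2 (ZMod.val_lt i), hi.2⟩
  · intro j hj
    rw [Finset.mem_filter] at hj ⊢
    rw [ZMod.val_cast_of_lt (Finset.mem_range.1 hj.1)]
    exact ⟨Finset.mem_univ _, hj.2⟩
  · intro i _
    exact ZMod.natCast_rightInverse i
  · intro j hj
    rw [Finset.mem_filter] at hj
    exact ZMod.val_cast_of_lt (Finset.mem_range.1 hj.1)

lemma M_eq (k q s a : ℕ) (hk : k = 2*q+1) (hq : 2 ≤ q) (hs : s < q) (ha : 1 ≤ a)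
    [NeZero k] : M k s a = k * a + 2 * s := by
  classical
  have h1 : (Finset.univ : Finset (Fin (M k s a))).card
      = ∑ i ∈ (Finset.univ : Finset (ZMod k)),
        (Finset.univ.filter (fun v : Fin (M k s a) => pN k s a v.val = i)).card :=
    Finset.card_eq_sum_card_fiberwise (fun v _ => Finset.mem_univ _)
  rw [Finset.card_univ, Fintype.card_fin] at h1
  rw [h1]
  have h2 : ∀ i ∈ (Finset.univ : Finset (ZMod k)),
      (Finset.univ.filter (fun v : Fin (M k s a) => pN k s a v.val = i)).card
        = a + (if i.val < 2*s then 1 else 0) := fun i _ => fib_card k q s a hk hq hs ha i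
  rw [Finset.sum_congr rfl h2, Finset.sum_add_distrib, Finset.sum_const, Finset.card_univ,
    ZMod.card, smul_eq_mul, ← Finset.card_filter, card_val_filter k (fun j => j < 2*s)]
  have h3 : (range k).filter (fun j => j < 2*s) = range (2*s) := by
    ext j
    simp only [Finset.mem_filter, Finset.mem_range]
    omega
  rw [h3, Finset.card_range]

lemma card_evens (k q : ℕ) (hk : k = 2*q+1) :
    ((range k).filter (fun j => j % 2 = 0 ∧ j + 1 < k)).card = q := by
  have himg : (range k).filter (fun j => j % 2 = 0 ∧ j + 1 < k)
      = (range q).image (fun t => 2*t) := by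
    ext j
    simp only [Finset.mem_filter, Finset.mem_range, Finset.mem_image]
    constructor
    · rintro ⟨h1, h2, h3⟩
      exact ⟨j/2, by omega, by omega⟩
    · rintro ⟨t, ht, rfl⟩
      omega
  rw [himg, Finset.card_image_of_injective _ (fun u v h => by omega), Finset.card_range]

lemma card_evens_s (k q s : ℕ) (hk : k = 2*q+1) (hs : s < q) :
    ((range k).filter (fun j => (j % 2 = 0 ∧ j + 1 < k) ∧ j < 2*s)).card = s := by
  have himg : (range k).filter (fun j => (j % 2 = 0 ∧ j + 1 < k) ∧ j < 2*s)
      = (range s).image (fun t => 2*t) := by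
    ext j
    simp only [Finset.mem_filter, Finset.mem_range, Finset.mem_image]
    constructor
    · rintro ⟨h1, ⟨h2, h3⟩, h4⟩
      exact ⟨j/2, by omega, by omega⟩
    · rintro ⟨t, ht, rfl⟩
      omega
  rw [himg, Finset.card_image_of_injective _ (fun u v h => by omega), Finset.card_range]

lemma nat_indep (k q : ℕ) (hk : k = 2*q+1) (hq : 2 ≤ q) (J' : Finset ℕ)
    (hlt : ∀ u ∈ J', u < k)
    (hcons : ∀ u, u ∈ J' → u + 1 ∈ J' → False)
    (hwrap : ¬(0 ∈ J' ∧ k - 1 ∈ J')) :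
    J'.card ≤ q := by
  by_cases h0 : 0 ∈ J'
  · have h1 : 1 ∉ J' := fun h => hcons 0 h0 h
    have hk1 : k - 1 ∉ J' := fun h => hwrap ⟨h0, h⟩
    have herase : (J'.erase 0).card ≤ q - 1 := by
      have : (J'.erase 0).card ≤ (range (q-1)).card := by
        apply Finset.card_le_card_of_injOn (fun u => (u-2)/2)
        · intro u hu
          have hu0 : u ≠ 0 := Finset.ne_of_mem_erase hu
          have huJ : u ∈ J' := Finset.mem_of_mem_erase hu
          have := hlt u huJ
          have hu1 : u ≠ 1 := fun h => h1 (h ▸ huJ)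
          have huk : u ≠ k - 1 := fun h => hk1 (h ▸ huJ)
          simp only [Finset.mem_coe, Finset.mem_range]
          omega
        · intro u hu v hv hf
          dsimp only at hf
          have huJ : u ∈ J' := Finset.mem_of_mem_erase hu
          have hvJ : v ∈ J' := Finset.mem_of_mem_erase hv
          have hu0 : u ≠ 0 := Finset.ne_of_mem_erase hu
          have hv0 : v ≠ 0 := Finset.ne_of_mem_erase hv
          have hu1 : u ≠ 1 := fun h => h1 (h ▸ huJ)
          have hv1 : v ≠ 1 := fun h => h1 (h ▸ hvJ)
          have : u = v ∨ u + 1 = v ∨ v + 1 = u := by omega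
          rcases this with h | h | h
          · exact h
          · exact absurd (h ▸ hvJ) (fun hh => hcons u huJ hh)
          · exact absurd (h ▸ huJ) (fun hh => hcons v hvJ hh)
      rwa [Finset.card_range] at this
    have := Finset.card_erase_add_one h0
    omega
  · have : J'.card ≤ (range q).card := by
      apply Finset.card_le_card_of_injOn (fun u => (u-1)/2)
      · intro u hu
        have := hlt u hu
        have hu0 : u ≠ 0 := fun h => h0 (h ▸ hu)
        simp only [Finset.mem_coe, Finset.mem_range]
        omega
      · intro u hu v hv hf
        dsimp only at hf
        have hu0 : u ≠ 0 := fun h => h0 (h ▸ hu)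
        have hv0 : v ≠ 0 := fun h => h0 (h ▸ hv)
        have : u = v ∨ u + 1 = v ∨ v + 1 = u := by omega
        rcases this with h | h | h
        · exact h
        · exact absurd (h ▸ hv) (fun hh => hcons u hu hh)
        · exact absurd (h ▸ hu) (fun hh => hcons v hv hh)
    rwa [Finset.card_range] at this


lemma indep_card (k q : ℕ) [NeZero k] (hk : k = 2*q+1) (hq : 2 ≤ q) (J : Finset (ZMod k))
    (hInd : ∀ i ∈ J, i + 1 ∉ J) : J.card ≤ q := by
  classical
  rw [← Finset.card_image_of_injective J (val_injective k)]
  apply nat_indep k q hk hq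
  · intro u hu
    rw [Finset.mem_image] at hu
    obtain ⟨i, _, rfl⟩ := hu
    exact ZMod.val_lt i
  · intro u hu hu1
    rw [Finset.mem_image] at hu hu1
    obtain ⟨i, hi, hiv⟩ := hu
    obtain ⟨i', hi', hiv'⟩ := hu1
    have : i' = i + 1 := by
      have h1 : ((i.val : ℕ) : ZMod k) = i := ZMod.natCast_rightInverse i
      have h2 : ((i'.val : ℕ) : ZMod k) = i' := ZMod.natCast_rightInverse i'
      rw [← h1, ← h2, hiv, hiv']
      push_cast
      ring
    exact hInd i hi (this ▸ hi')
  · rintro ⟨h0, hk1⟩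
    rw [Finset.mem_image] at h0 hk1
    obtain ⟨i, hi, hiv⟩ := h0
    obtain ⟨i', hi', hiv'⟩ := hk1
    have : i = i' + 1 := by
      have e1 : i = ((0:ℕ) : ZMod k) := by rw [← hiv]; exact (ZMod.natCast_rightInverse i).symm
      have e2 : i' = ((k-1:ℕ) : ZMod k) := by rw [← hiv']; exact (ZMod.natCast_rightInverse i').symm
      have e3 : ((k-1:ℕ) : ZMod k) = -1 := by
        push_cast [Nat.cast_sub (by omega : 1 ≤ k)]
        rw [ZMod.natCast_self]
        ring
      rw [e1, e2, e3]
      push_cast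
      ring
    exact hInd i' hi' (this ▸ hi)


lemma heavy_card (k q s : ℕ) [NeZero k] (hk : k = 2*q+1) (hq : 2 ≤ q) (hs : s < q)
    (J : Finset (ZMod k)) (hInd : ∀ i ∈ J, i + 1 ∉ J) :
    (J.filter (fun i => i.val < 2*s)).card ≤ s := by
  classical
  have : (J.filter (fun i => i.val < 2*s)).card ≤ (range s).card := by
    apply Finset.card_le_card_of_injOn (fun i => i.val / 2)
    · intro i hi
      rw [Finset.mem_coe, Finset.mem_filter] at hi
      simp only [Finset.mem_coe, Finset.mem_range]
      omega
    · intro i hi i' hi' hf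
      dsimp only at hf
      simp only [Finset.mem_coe, Finset.mem_filter] at hi hi'
      have hvi := hi.2
      have hvi' := hi'.2
      have hcast : ∀ u u' : ZMod k, u ∈ J → u' ∈ J → u'.val = u.val + 1 → False := by
        intro u u' hu hu' hval
        have : u' = u + 1 := by
          have h1 : ((u.val : ℕ) : ZMod k) = u := ZMod.natCast_rightInverse u
          have h2 : ((u'.val : ℕ) : ZMod k) = u' := ZMod.natCast_rightInverse u'
          rw [← h1, ← h2, hval]
          push_cast
          ring
        exact hInd u hu (this ▸ hu')
      have : i.val = i'.val ∨ i'.val = i.val + 1 ∨ i.val = i'.val + 1 := by omega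
      rcases this with h | h | h
      · exact val_injective k h
      · exact absurd (hcast i i' hi.1 hi'.1 h) (fun hh => hh)
      · exact absurd (hcast i' i hi'.1 hi.1 h) (fun hh => hh)
  rwa [Finset.card_range] at this


lemma one_lt_k (k q : ℕ) (hk : k = 2*q+1) (hq : 2 ≤ q) : Fact (1 < k) := ⟨by omega⟩

lemma clique_upper (k q s a : ℕ) (hk : k = 2*q+1) (hq : 2 ≤ q) (hs : s < q) (ha : 1 ≤ a)
    [NeZero k] (t : Finset (Fin (M k s a))) (ht : (A k s a).IsClique ↑t) :
    t.card ≤ q * a + s := by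
  classical
  haveI : Fact (1 < k) := one_lt_k k q hk hq
  set pf : Fin (M k s a) → ZMod k := fun v => pN k s a v.val with hpf
  set J : Finset (ZMod k) := t.image pf with hJ
  have hInd : ∀ i ∈ J, i + 1 ∉ J := by
    intro i hi hc
    rw [hJ, Finset.mem_image] at hi hc
    obtain ⟨u, hu, hpu⟩ := hi
    obtain ⟨v, hv, hpv⟩ := hc
    have hne : u ≠ v := by
      intro h
      rw [h, hpv] at hpu
      exact one_ne_zero (left_eq_add.1 hpu.symm)
    have hadj := ht hu hv hne
    exact hadj.2.2 (by show pf v - pf u = 1; rw [hpv, hpu]; ring)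
  have hfib : t.card = ∑ i ∈ J, (t.filter (fun v => pf v = i)).card :=
    Finset.card_eq_sum_card_fiberwise (fun v hv => Finset.mem_image_of_mem pf hv)
  have hle : ∀ i ∈ J, (t.filter (fun v => pf v = i)).card
      ≤ a + (if i.val < 2*s then 1 else 0) := by
    intro i _
    calc (t.filter (fun v => pf v = i)).card
        ≤ (Finset.univ.filter (fun v : Fin (M k s a) => pN k s a v.val = i)).card :=
          Finset.card_le_card (Finset.filter_subset_filter _ (Finset.subset_univ t))
      _ = a + (if i.val < 2*s then 1 else 0) := fib_card k q s a hk hq hs ha i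
  calc t.card ≤ ∑ i ∈ J, (a + (if i.val < 2*s then 1 else 0)) := by
        rw [hfib]; exact Finset.sum_le_sum hle
    _ = J.card * a + (J.filter (fun i => i.val < 2*s)).card := by
        rw [Finset.sum_add_distrib, Finset.sum_const, smul_eq_mul, ← Finset.card_filter]
    _ ≤ q * a + s :=
        Nat.add_le_add (Nat.mul_le_mul_right a (indep_card k q hk hq J hInd))
          (heavy_card k q s hk hq hs J hInd)

lemma val_add_one_of_lt (k : ℕ) [NeZero k] (hk1 : 1 < k) {α : ZMod k} (h : α.val + 1 < k) :
    (α + 1).val = α.val + 1 := by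
  haveI : Fact (1 < k) := ⟨hk1⟩
  rw [ZMod.val_add, ZMod.val_one]
  exact Nat.mod_eq_of_lt h

lemma clique_lower (k q s a : ℕ) (hk : k = 2*q+1) (hq : 2 ≤ q) (hs : s < q) (ha : 1 ≤ a)
    [NeZero k] :
    ∃ W : Finset (Fin (M k s a)), (A k s a).IsNClique (q * a + s) W := by
  classical
  haveI : Fact (1 < k) := one_lt_k k q hk hq
  set pf : Fin (M k s a) → ZMod k := fun v => pN k s a v.val with hpf
  set Qz : ZMod k → Prop := fun i => i.val % 2 = 0 ∧ i.val + 1 < k with hQz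
  set W : Finset (Fin (M k s a)) := Finset.univ.filter (fun v => Qz (pf v)) with hW
  refine ⟨W, ?_, ?_⟩
  · -- clique
    intro u hu v hv hne
    simp only [hW, Finset.coe_filter, Set.mem_setOf_eq, Finset.mem_univ, true_and] at hu hv
    have key : ∀ α β : ZMod k, Qz α → Qz β → α - β ≠ 1 := by
      intro α β hα hβ hcontra
      have : α = β + 1 := by linear_combination hcontra
      have hv1 : α.val = β.val + 1 := by rw [this, val_add_one_of_lt k (by omega) hβ.2]
      have h1 := hα.1
      have h2 := hβ.1
      omega
    exact ⟨hne, key _ _ hu hv, key _ _ hv hu⟩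
  · -- card
    have hfib : W.card = ∑ i ∈ Finset.univ.filter Qz, (W.filter (fun v => pf v = i)).card := by
      apply Finset.card_eq_sum_card_fiberwise
      intro v hv
      rw [hW, Finset.mem_coe, Finset.mem_filter] at hv
      exact Finset.mem_coe.2 (Finset.mem_filter.2 ⟨Finset.mem_univ _, hv.2⟩)
    have heq : ∀ i ∈ Finset.univ.filter Qz, (W.filter (fun v => pf v = i)).card
        = a + (if i.val < 2*s then 1 else 0) := by
      intro i hi
      rw [Finset.mem_filter] at hi
      have : W.filter (fun v => pf v = i) = Finset.univ.filter (fun v => pN k s a v.val = i) := by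
        ext v
        simp only [hW, Finset.mem_filter, Finset.mem_univ, true_and]
        constructor
        · rintro ⟨_, h⟩; exact h
        · intro h
          refine ⟨?_, h⟩
          show Qz (pf v)
          have hh : pf v = i := h
          rw [hh]
          exact hi.2
      rw [this]
      exact fib_card k q s a hk hq hs ha i
    rw [hfib, Finset.sum_congr rfl heq, Finset.sum_add_distrib, Finset.sum_const, smul_eq_mul,
      ← Finset.card_filter, Finset.filter_filter]
    have h1 : (Finset.univ.filter Qz).card = q := by
      show (Finset.univ.filter (fun i : ZMod k => i.val % 2 = 0 ∧ i.val + 1 < k)).card = q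
      have := card_val_filter k (fun j => j % 2 = 0 ∧ j + 1 < k)
      rw [this, card_evens k q hk]
    have h2 : (Finset.univ.filter (fun i : ZMod k => Qz i ∧ i.val < 2*s)).card = s := by
      show (Finset.univ.filter
        (fun i : ZMod k => (i.val % 2 = 0 ∧ i.val + 1 < k) ∧ i.val < 2*s)).card = s
      have := card_val_filter k (fun j => (j % 2 = 0 ∧ j + 1 < k) ∧ j < 2*s)
      rw [this, card_evens_s k q s hk hs]
    rw [h1, h2]


lemma colorable_g (k q s a : ℕ) (hk : k = 2*q+1) (hq : 2 ≤ q) [NeZero k] :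
    (A k s a).Colorable (P k s a + a % 2) := by
  have hg : ∀ v : Fin (M k s a), v.val / 2 < P k s a + a % 2 := by
    intro v
    have := v.isLt
    simp only [M] at this
    omega
  refine ⟨SimpleGraph.Coloring.mk (fun v => ⟨v.val / 2, hg v⟩) ?_⟩
  intro u v hadj heq
  rw [Fin.mk.injEq] at heq
  have hne : u.val ≠ v.val := fun h => hadj.1 (Fin.val_injective h)
  have hMv := v.isLt
  have hMu := u.isLt
  simp only [M] at hMv hMu
  set t := u.val / 2 with hts
  have hsplit : (u.val = 2*t ∧ v.val = 2*t+1) ∨ (v.val = 2*t ∧ u.val = 2*t+1) := by omega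
  have htP : t < P k s a := by omega
  rcases hsplit with ⟨h1, h2⟩ | ⟨h1, h2⟩
  · apply hadj.2.2
    show pN k s a v.val - pN k s a u.val = 1
    rw [h1, h2, pN_even k s a htP, pN_odd k s a htP]
    push_cast
    ring
  · apply hadj.2.1
    show pN k s a u.val - pN k s a v.val = 1
    rw [h1, h2, pN_even k s a htP, pN_odd k s a htP]
    push_cast
    ring

lemma parts_clique_aux (k q s a : ℕ) (hk : k = 2*q+1) (hq : 2 ≤ q) [NeZero k]
    {u v : Fin (M k s a)} (hne : u ≠ v) (heq : pN k s a u.val = pN k s a v.val) :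
    (A k s a).Adj u v := by
  haveI : Fact (1 < k) := one_lt_k k q hk hq
  refine ⟨hne, ?_, ?_⟩
  · rw [heq, sub_self]; exact fun h => one_ne_zero h.symm
  · rw [heq, sub_self]; exact fun h => one_ne_zero h.symm

lemma pm_one_contra (k q : ℕ) (hk : k = 2*q+1) (hq : 2 ≤ q) [NeZero k]
    (B C D : ZMod k) (hB : B = 1 ∨ B = -1) (hC : C = 1 ∨ C = -1) (hD : D = 1 ∨ D = -1)
    (hsum : B + C + D = 0) : False := by
  have h1 : (1 : ZMod k) ≠ 0 := by
    intro h
    have : ((1 : ℕ) : ZMod k) = 0 := by exact_mod_cast h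
    rw [ZMod.natCast_eq_zero_iff] at this
    have := Nat.le_of_dvd one_pos this
    omega
  have h3 : (3 : ZMod k) ≠ 0 := by
    intro h
    have : ((3 : ℕ) : ZMod k) = 0 := by exact_mod_cast h
    rw [ZMod.natCast_eq_zero_iff] at this
    have := Nat.le_of_dvd (by norm_num) this
    omega
  rcases hB with rfl | rfl <;> rcases hC with rfl | rfl <;> rcases hD with rfl | rfl <;>
    first
      | exact h1 (by linear_combination hsum)
      | exact h1 (by linear_combination -hsum)
      | exact h3 (by linear_combination hsum)
      | exact h3 (by linear_combination -hsum)

lemma chrom_lower (k q s a : ℕ) (hk : k = 2*q+1) (hq : 2 ≤ q) [NeZero k]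
    (c : ℕ) (hcol : (A k s a).Colorable c) : P k s a + a % 2 ≤ c := by
  classical
  obtain ⟨C⟩ := hcol
  have hfiber : ∀ i : Fin c, (Finset.univ.filter (fun v : Fin (M k s a) => C v = i)).card ≤ 2 := by
    intro i
    by_contra hcon
    push_neg at hcon
    rw [Finset.two_lt_card] at hcon
    obtain ⟨u, hu, v, hv, w, hw, huv, huw, hvw⟩ := hcon
    rw [Finset.mem_filter] at hu hv hw
    have hnadj : ∀ {x y : Fin (M k s a)}, C x = C y → x ≠ y →
        pN k s a x.val - pN k s a y.val = 1 ∨ pN k s a y.val - pN k s a x.val = 1 := by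
      intro x y hcxy hxy
      have : ¬ (A k s a).Adj x y := fun h => C.valid h hcxy
      by_contra hcc
      push_neg at hcc
      exact this ⟨hxy, hcc.1, hcc.2⟩
    have hBC := hnadj (hu.2.trans hv.2.symm) huv
    have hCD := hnadj (hv.2.trans hw.2.symm) hvw
    have hBD := hnadj (hu.2.trans hw.2.symm) huw
    set pu := pN k s a u.val
    set pv := pN k s a v.val
    set pw := pN k s a w.val
    have hB : pu - pv = 1 ∨ pu - pv = -1 := by
      rcases hBC with h | h
      · exact Or.inl h
      · exact Or.inr (by linear_combination -h)
    have hC : pv - pw = 1 ∨ pv - pw = -1 := by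
      rcases hCD with h | h
      · exact Or.inl h
      · exact Or.inr (by linear_combination -h)
    have hD : pw - pu = 1 ∨ pw - pu = -1 := by
      rcases hBD with h | h
      · exact Or.inr (by linear_combination -h)
      · exact Or.inl h
    exact pm_one_contra k q hk hq _ _ _ hB hC hD (by ring)
  have hcards : M k s a ≤ 2 * c := by
    have h1 : (Finset.univ : Finset (Fin (M k s a))).card
        = ∑ i ∈ (Finset.univ : Finset (Fin c)),
          (Finset.univ.filter (fun v : Fin (M k s a) => C v = i)).card :=
      Finset.card_eq_sum_card_fiberwise (fun v _ => Finset.mem_univ _)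
    rw [Finset.card_univ, Fintype.card_fin] at h1
    calc M k s a = _ := h1
      _ ≤ ∑ _i ∈ (Finset.univ : Finset (Fin c)), 2 := Finset.sum_le_sum (fun i _ => hfiber i)
      _ = 2 * c := by rw [Finset.sum_const, Finset.card_univ, Fintype.card_fin, smul_eq_mul]; ring
  simp only [M] at hcards
  omega

end HAH

section RingGArith

lemma hdiv_helper (D Q R : ℕ) (hD : 0 < D) (hR : R < D) :
    (Q * D + R) / D = Q ∧ (Q * D + R) % D = R := by
  constructor
  · rw [Nat.mul_comm, Nat.mul_add_div hD, Nat.div_eq_of_lt hR, Nat.add_zero]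
  · rw [Nat.mul_comm, Nat.mul_add_mod, Nat.mod_eq_of_lt hR]

lemma ringG_eq (k q s a n g : ℕ) (hk : k = 2*q+1) (hq : 2 ≤ q) (hs : s < q) (ha : 1 ≤ a)
    (hn : n = q * a + s) (hg : 2 * g = k * a + 2 * s + a % 2) :
    ringG k n = g := by
  obtain ⟨c, hc⟩ : ∃ c, q = c + 2 := ⟨q - 2, by omega⟩
  rcases Nat.mod_two_eq_zero_or_one a with ha2 | ha2
  · obtain ⟨b, hb⟩ : ∃ b, a = 2 * b := ⟨a / 2, by omega⟩
    have hmod : n % (k-1) = s := by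
      have h1 : n = b * (k-1) + s := by
        rw [hn, hb, show k - 1 = 2*q by omega]; ring
      rw [h1]; exact (hdiv_helper (k-1) b s (by omega) (by omega)).2
    have hdiv1 : k * n / (k-1) = 2*b*q + b + s := by
      have h1 : k * n = (2*b*q + b + s) * (k-1) + s := by
        rw [hk, hn, hb, show 2*q+1-1 = 2*q by omega]; ring
      rw [h1]; exact (hdiv_helper (k-1) _ s (by omega) (by omega)).1
    rw [ringG, hmod, if_pos (by omega : s ≤ (k-3)/2), hdiv1]
    have hka : k * a = 2*(2*b*q) + 2*b := by rw [hk, hb]; ring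
    omega
  · obtain ⟨b, hb⟩ : ∃ b, a = 2 * b + 1 := ⟨a / 2, by omega⟩
    have hmod : n % (k-1) = q + s := by
      have h1 : n = b * (k-1) + (q+s) := by
        rw [hn, hb, show k - 1 = 2*q by omega]; ring
      rw [h1]; exact (hdiv_helper (k-1) b (q+s) (by omega) (by omega)).2
    have hdiv2 : (k * n + (k-2)) / (k-1) = 2*b*q + q + s + b + 1 := by
      have h1 : k * n + (k - 2) = (2*b*q + q + s + b + 1) * (k - 1) + (q + s - 1) := by
        rw [hk, hn, hb, hc]
        rw [show 2*(c+2)+1-2 = 2*c+3 by omega, show 2*(c+2)+1-1 = 2*(c+2) by omega,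
          show (c+2)+s-1 = c+s+1 by omega]
        ring
      rw [h1]; exact (hdiv_helper (k-1) _ (q+s-1) (by omega) (by omega)).1
    rw [ringG, hmod, if_neg (by omega), hdiv2]
    have hka : k * a = 2*(2*b*q) + 2*b + 2*q + 1 := by rw [hk, hb]; ring
    omega

end RingGArith

/-- For odd `k ≥ 5` and every `n ≥ (k-1)/2`, there is a `k`-hyperantihole `A`
with `ω(A) = n` and `χ(A) = g_k(n)`. -/
theorem exists_hyperantihole_chi_eq_ringG
    (k : ℕ) (hk : 5 ≤ k) (hko : Odd k) (n : ℕ) (hn : (k - 1) / 2 ≤ n) :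
    ∃ (m : ℕ) (A : SimpleGraph (Fin m)), IsHyperantihole A k ∧
      A.cliqueNum = n ∧ A.chromaticNumber = (ringG k n : ℕ∞) := by
  classical
  obtain ⟨q, hkq0⟩ := hko
  have hkq : k = 2*q+1 := by omega
  have hq : 2 ≤ q := by omega
  haveI : NeZero k := ⟨by omega⟩
  haveI : Fact (1 < k) := ⟨by omega⟩
  set a := n / q with hadef
  set s := n % q with hsdef
  have hn' : n = q * a + s := (Nat.div_add_mod n q).symm
  have hs : s < q := Nat.mod_lt n (by omega)
  have ha : 1 ≤ a := (Nat.one_le_div_iff (by omega)).2 (by omega)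
  refine ⟨HAH.M k s a, HAH.A k s a, ?_, ?_, ?_⟩
  · -- k-hyperantihole
    refine ⟨fun i => {v | HAH.pN k s a v.val = i}, ?_, ?_, ?_, ?_, ?_⟩
    · intro i
      have hcard := HAH.fib_card k q s a hkq hq hs ha i
      have hpos : 0 < (Finset.univ.filter
          (fun v : Fin (HAH.M k s a) => HAH.pN k s a v.val = i)).card := by
        rw [hcard]; omega
      obtain ⟨v, hv⟩ := Finset.card_pos.1 hpos
      exact ⟨v, (Finset.mem_filter.1 hv).2⟩
    · intro v
      refine ⟨HAH.pN k s a v.val, rfl, ?_⟩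
      intro y hy
      exact hy.symm
    · intro i u hu v hv hne
      exact HAH.parts_clique_aux k q s a hkq hq hne (hu.trans hv.symm)
    · intro i xx hx y hy
      have hx' : HAH.pN k s a xx.val = i := hx
      simp only [Set.mem_union, Set.mem_setOf_eq] at hy
      push_neg at hy
      refine ⟨?_, ?_, ?_⟩
      · intro h
        exact hy.1.2 (h ▸ hx')
      · intro h
        exact hy.1.1 (by linear_combination hx' - h)
      · intro h
        exact hy.2 (by linear_combination h + hx')
    · intro i xx hx y hy hadj
      have hx' : HAH.pN k s a xx.val = i := hx
      simp only [Set.mem_union, Set.mem_setOf_eq] at hy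
      rcases hy with hy | hy
      · exact hadj.2.1 (by rw [hx', hy]; ring)
      · exact hadj.2.2 (by rw [hx', hy]; ring)
  · -- cliqueNum = n
    obtain ⟨W, hW⟩ := HAH.clique_lower k q s a hkq hq hs ha
    rw [SimpleGraph.cliqueNum]
    apply IsGreatest.csSup_eq
    constructor
    · exact ⟨W, by rw [hn']; exact hW⟩
    · rintro m' ⟨t, htc⟩
      rw [← htc.card_eq, hn']
      exact HAH.clique_upper k q s a hkq hq hs ha t htc.isClique
  · -- chromaticNumber = ringG k n
    have hcol := HAH.colorable_g k q s a hkq hq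
    have hMka : HAH.M k s a = k * a + 2 * s := HAH.M_eq k q s a hkq hq hs ha
    have h2g : 2 * (HAH.P k s a + a % 2) = k * a + 2 * s + a % 2 := by
      simp only [HAH.M] at hMka; omega
    have hring : ringG k n = HAH.P k s a + a % 2 :=
      ringG_eq k q s a n _ hkq hq hs ha hn' h2g
    have hEq : sInf {c : ℕ | (HAH.A k s a).Colorable c} = HAH.P k s a + a % 2 :=
      le_antisymm (Nat.sInf_le hcol)
        ((HAH.chrom_lower k q s a hkq hq _ (Nat.sInf_mem
          (⟨_, hcol⟩ : {c : ℕ | (HAH.A k s a).Colorable c}.Nonempty))))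
    rw [hcol.chromaticNumber_eq_sInf, hEq, hring]
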